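/- arXiv:1612.08575 — 3 statements merged into one kernel-verified Lean document; each statement's English description precedes it below -/
import Mathlib

section
/- Let z be a complex number and n a natural number with n ≥ 10(|z|+1). Then |e^z − Σ_{j=0}^{n} z^j/j!| ≤ e^{−n}. -/
theorem stmt_1 (z : ℂ) (n : ℕ) (hn : (10 : ℝ) * (‖z‖ + 1) ≤ n) :
    ‖Complex.exp z - ∑ j ∈ Finset.range (n + 1), z ^ j / (Nat.factorial j : ℂ)‖
      ≤ Real.exp (-(n : ℝ)) := by
  have h0 : (0:ℝ) ≤ ‖z‖ := norm_nonneg z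
  have hn10 : (10:ℝ) ≤ n := by nlinarith
  have hNa : ‖z‖ = ‖z‖ := rfl
  have hx : ‖z‖ / ((n+1:ℕ)).succ ≤ 1/2 := by
    rw [hNa, div_le_iff₀ (by positivity)]
    push_cast
    nlinarith
  have hb := Complex.exp_bound' (n := n+1) hx
  refine le_trans hb ?_
  have hF : (0:ℝ) < ((n+1).factorial : ℝ) := by positivity
  have key1 : ((n:ℝ)+1) ^ (n+1) / ((n+1).factorial : ℝ) ≤ Real.exp ((n:ℝ)+1) := by
    have := Real.pow_div_factorial_le_exp (x := (n:ℝ)+1) (by positivity) (n+1)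
    simpa using this
  have ha : ‖z‖ ≤ ((n:ℝ)+1)/10 := by nlinarith
  have he : Real.exp 1 < 2.7182818286 := Real.exp_one_lt_d9
  have hepos : (0:ℝ) < Real.exp 1 := Real.exp_pos 1
  have he2 : Real.exp 2 ≤ 10 := by
    have h2 : Real.exp 2 = Real.exp 1 * Real.exp 1 := by
      rw [← Real.exp_add]; norm_num
    nlinarith
  have he1 : Real.exp 1 ≤ 5 := by nlinarith
  calc ‖z‖ ^ (n+1) / ((n+1).factorial : ℝ) * 2
      ≤ (((n:ℝ)+1)/10) ^ (n+1) / ((n+1).factorial : ℝ) * 2 := by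
        rw [hNa]; gcongr
    _ = ((n:ℝ)+1) ^ (n+1) / ((n+1).factorial : ℝ) * ((1/10) ^ (n+1) * 2) := by
        rw [div_pow, div_pow, one_pow]; ring
    _ ≤ Real.exp ((n:ℝ)+1) * ((1/10) ^ (n+1) * 2) := by gcongr
    _ ≤ Real.exp ((n:ℝ)+1) * Real.exp (-(2*(n:ℝ)+1)) := by
        refine mul_le_mul_of_nonneg_left ?_ (Real.exp_pos _).le
        have h2 : Real.exp (-(2*(n:ℝ)+1)) = Real.exp (-2) ^ n * Real.exp (-1) := by
          rw [← Real.exp_nat_mul, ← Real.exp_add]; ring_nf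
        rw [h2]
        have h110 : (1/10:ℝ) ≤ Real.exp (-2) := by
          have hinv2 : Real.exp (-2) * Real.exp 2 = 1 := by
            rw [← Real.exp_add]; norm_num
          nlinarith [Real.exp_pos (-2:ℝ), Real.exp_pos (2:ℝ)]
        have hA : (1/10:ℝ) ^ n ≤ Real.exp (-2) ^ n :=
          pow_le_pow_left₀ (by norm_num) h110 n
        have hB : (1/10:ℝ) * 2 ≤ Real.exp (-1) := by
          have hinv : Real.exp (-1) * Real.exp 1 = 1 := by
            rw [← Real.exp_add]; norm_num
          nlinarith [Real.exp_pos (-1:ℝ)]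
        calc (1/10:ℝ) ^ (n+1) * 2 = (1/10)^n * ((1/10)*2) := by ring
          _ ≤ Real.exp (-2) ^ n * Real.exp (-1) := by
              apply mul_le_mul hA hB (by norm_num) (by positivity)
    _ = Real.exp (-(n:ℝ)) := by rw [← Real.exp_add]; ring_nf
end

section
/- For real numbers x and c with c > 0, the contour integral (1/(2πi)) ∫_{c−i∞}^{c+i∞} e^{xw}/w² dw equals x if x ≥ 0 and equals 0 if x ≤ 0. Equivalently, (1/(2π)) ∫_{−∞}^{∞} e^{x(c+it)}/(c+it)² dt = max(x,0). -/
open MeasureTheory Complex Set Filter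

lemma aux_real_int {c : ℝ} (hc : 0 < c) :
    IntegrableOn (fun s : ℝ => s * Real.exp (-c * s)) (Ioi 0) := by
  apply integrable_of_isBigO_exp_neg (half_pos hc) (by fun_prop)
  have h1 := tendsto_rpow_mul_exp_neg_mul_atTop_nhds_zero 1 (c/2) (half_pos hc)
  have h2 : (fun s : ℝ => s ^ (1:ℝ) * Real.exp (-(c/2) * s)) =O[atTop] (fun _ : ℝ => (1:ℝ)) :=
    h1.isBigO_one ℝ
  have h3 : (fun s : ℝ => (s ^ (1:ℝ) * Real.exp (-(c/2) * s)) * Real.exp (-(c/2) * s))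
      =O[atTop] (fun s : ℝ => 1 * Real.exp (-(c/2) * s)) := h2.mul (Asymptotics.isBigO_refl _ _)
  refine h3.congr' ?_ (by filter_upwards with s using one_mul _)
  filter_upwards [eventually_gt_atTop 0] with s hs
  rw [Real.rpow_one, mul_assoc, ← Real.exp_add]
  ring_nf

lemma aux_cx_int {a : ℂ} (ha : 0 < a.re) :
    IntegrableOn (fun s : ℝ => (s : ℂ) * Complex.exp (-(a * s))) (Ioi 0) := by
  apply Integrable.mono' (aux_real_int ha) (by fun_prop : Continuous fun s : ℝ =>
    (s : ℂ) * Complex.exp (-(a * s))).aestronglyMeasurable.restrict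
  filter_upwards [ae_restrict_mem measurableSet_Ioi] with s hs
  rw [norm_mul, Complex.norm_real, Complex.norm_exp, Real.norm_of_nonneg (le_of_lt hs)]
  have : (-(a * (s:ℂ))).re = -a.re * s := by simp [Complex.mul_re]
  rw [this]

lemma aux_laplace {a : ℂ} (ha : 0 < a.re) :
    ∫ s : ℝ in Ioi 0, (s : ℂ) * Complex.exp (-(a * s)) = (a⁻¹) ^ 2 := by
  have ha0 : a ≠ 0 := fun h => by simp [h] at ha
  have hF : ∀ s ∈ Ici (0:ℝ), HasDerivAt
      (fun s : ℝ => -((s : ℂ) * a⁻¹ + a⁻¹ ^ 2) * Complex.exp (-(a * s)))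
      ((s : ℂ) * Complex.exp (-(a * s))) s := by
    intro s _
    have h1 : HasDerivAt (fun s : ℝ => (s : ℂ)) 1 s := Complex.ofRealCLM.hasDerivAt
    have h2 : HasDerivAt (fun s : ℝ => -(a * (s:ℂ))) (-a) s := by
      have h := (h1.const_mul a).neg
      rw [mul_one] at h
      exact h
    have h3 := h2.cexp
    have h4 : HasDerivAt (fun s : ℝ => -((s : ℂ) * a⁻¹ + a⁻¹ ^ 2)) (-a⁻¹) s := by
      have h5 := ((h1.mul_const a⁻¹).add_const (a⁻¹^2)).neg
      convert h5 using 1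
      · rfl
      · rfl
      ring
    have := h4.mul h3
    convert this using 1
    · rfl
    · rfl
    field_simp
    ring
  have htend : Tendsto (fun s : ℝ => -((s : ℂ) * a⁻¹ + a⁻¹ ^ 2) * Complex.exp (-(a * s)))
      atTop (nhds 0) := by
    have hb : ∀ᶠ s : ℝ in atTop, ‖-((s : ℂ) * a⁻¹ + a⁻¹ ^ 2) * Complex.exp (-(a * s))‖
        ≤ (s * ‖a⁻¹‖ + ‖a⁻¹^2‖) * Real.exp (-a.re * s) := by
      filter_upwards [eventually_ge_atTop (0:ℝ)] with s hs
      rw [norm_mul, Complex.norm_exp]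
      have hre : (-(a * (s:ℂ))).re = -a.re * s := by simp [Complex.mul_re]
      rw [hre]
      gcongr
      rw [norm_neg]
      refine (norm_add_le _ _).trans ?_
      rw [norm_mul, Complex.norm_real, Real.norm_of_nonneg hs]
    refine squeeze_zero_norm' hb ?_
    have t1 : Tendsto (fun s : ℝ => s ^ (1:ℝ) * Real.exp (-a.re * s)) atTop (nhds 0) :=
      tendsto_rpow_mul_exp_neg_mul_atTop_nhds_zero 1 a.re ha
    have t2 : Tendsto (fun s : ℝ => Real.exp (-a.re * s)) atTop (nhds 0) := by
      apply Real.tendsto_exp_atBot.comp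
      exact (tendsto_id.const_mul_atTop_of_neg (by linarith)).comp tendsto_id
    have t3 := ((t1.const_mul ‖a⁻¹‖).add (t2.const_mul ‖a⁻¹^2‖))
    simp only [mul_zero, add_zero] at t3
    refine Tendsto.congr' ?_ t3
    filter_upwards [eventually_gt_atTop (0:ℝ)] with s hs
    rw [Real.rpow_one]
    ring
  have := integral_Ioi_of_hasDerivAt_of_tendsto' hF ((aux_cx_int ha)) htend
  rw [this]
  simp

open scoped FourierTransform Real

noncomputable def ff (c : ℝ) : ℝ → ℂ :=
  fun s => ((max s 0 : ℝ) : ℂ) * Complex.exp (-((c : ℂ) * s))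

lemma ff_eq_indicator (c : ℝ) :
    ff c = Set.indicator (Ioi 0) (fun s : ℝ => (s : ℂ) * Complex.exp (-((c : ℂ) * s))) := by
  funext s
  rcases lt_or_ge 0 s with h | h
  · simp [ff, Set.indicator_of_mem (mem_Ioi.mpr h), max_eq_left h.le]
  · rw [Set.indicator_of_notMem (by simpa using h)]
    simp [ff, max_eq_right h]

lemma ff_integrable {c : ℝ} (hc : 0 < c) : Integrable (ff c) := by
  rw [ff_eq_indicator, integrable_indicator_iff measurableSet_Ioi]
  simpa using aux_cx_int (a := (c : ℂ)) (by simpa using hc)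

lemma ff_fourier {c : ℝ} (hc : 0 < c) (ξ : ℝ) :
    𝓕 (ff c) ξ = (((c : ℂ) + 2 * π * ξ * Complex.I)⁻¹) ^ 2 := by
  rw [Real.fourier_real_eq_integral_exp_smul]
  have ha : (0:ℝ) < ((c : ℂ) + 2 * π * ξ * Complex.I).re := by simp [hc]
  calc (∫ v : ℝ, Complex.exp (↑(-2 * π * v * ξ) * Complex.I) • ff c v)
      = ∫ v : ℝ, Set.indicator (Ioi 0)
          (fun v : ℝ => (v : ℂ) * Complex.exp (-(((c : ℂ) + 2 * π * ξ * Complex.I) * v))) v := by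
        congr 1
        funext v
        rw [ff_eq_indicator]
        rcases lt_or_ge 0 v with h | h
        · rw [Set.indicator_of_mem (mem_Ioi.mpr h), Set.indicator_of_mem (mem_Ioi.mpr h)]
          rw [smul_eq_mul, mul_comm, mul_assoc, ← Complex.exp_add]
          push_cast
          ring_nf
        · rw [Set.indicator_of_notMem (by simpa using h),
            Set.indicator_of_notMem (by simpa using h), smul_zero]
    _ = ∫ v : ℝ in Ioi 0,
          (v : ℂ) * Complex.exp (-(((c : ℂ) + 2 * π * ξ * Complex.I) * v)) :=
        integral_indicator measurableSet_Ioi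
    _ = (((c : ℂ) + 2 * π * ξ * Complex.I)⁻¹) ^ 2 := aux_laplace ha

lemma aux_abs_sq {c : ℝ} (ξ : ℝ) :
    ‖(((c : ℂ) + 2 * π * ξ * Complex.I)⁻¹) ^ 2‖ = (c ^ 2 + (2 * π * ξ) ^ 2)⁻¹ := by
  rw [norm_pow, norm_inv]
  have h1 : ((c : ℂ) + 2 * π * ξ * Complex.I) = ((c : ℝ) : ℂ) + ((2 * π * ξ : ℝ) : ℂ) * Complex.I := by
    push_cast; ring
  rw [h1, Complex.norm_def, Complex.normSq_add_mul_I]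
  rw [← Real.sqrt_inv, Real.sq_sqrt (by positivity)]

lemma ff_fourier_integrable {c : ℝ} (hc : 0 < c) :
    Integrable (𝓕 (ff c)) := by
  have heq : 𝓕 (ff c) =
      fun ξ : ℝ => (((c : ℂ) + 2 * π * ξ * Complex.I)⁻¹) ^ 2 :=
    funext (ff_fourier hc)
  rw [heq]
  have hm : 0 < min (c ^ 2) ((2 * π) ^ 2) := by positivity
  have hcont : Continuous fun ξ : ℝ => (((c : ℂ) + 2 * π * ξ * Complex.I)⁻¹) ^ 2 := by
    apply Continuous.pow
    apply Continuous.inv₀ (by fun_prop)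
    intro ξ h
    have := congrArg Complex.re h
    simp at this
    exact hc.ne' this
  apply Integrable.mono' ((integrable_inv_one_add_sq).const_mul (min (c ^ 2) ((2 * π) ^ 2))⁻¹)
    hcont.aestronglyMeasurable
  filter_upwards with ξ
  rw [aux_abs_sq]
  rw [← mul_inv]
  apply inv_anti₀ (by positivity)
  have h1 : min (c ^ 2) ((2 * π) ^ 2) ≤ c ^ 2 := min_le_left _ _
  have h2 : min (c ^ 2) ((2 * π) ^ 2) * ξ ^ 2 ≤ (2 * π * ξ) ^ 2 := by
    have := min_le_right (c ^ 2) ((2 * π) ^ 2)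
    nlinarith [sq_nonneg ξ]
  nlinarith

theorem stmt_4 (x c : ℝ) (hc : 0 < c) :
    ((2 * Real.pi : ℝ) : ℂ)⁻¹ *
        ∫ t : ℝ, Complex.exp ((x : ℂ) * ((c : ℂ) + (t : ℂ) * Complex.I)) /
          ((c : ℂ) + (t : ℂ) * Complex.I) ^ 2
      = ((max x 0 : ℝ) : ℂ) := by
  have hcontf : Continuous (ff c) := by
    unfold ff
    fun_prop
  have hinv := (ff_integrable hc).fourierInv_fourier_eq (ff_fourier_integrable hc)
    (hcontf.continuousAt (x := x))
  set G : ℝ → ℂ :=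
    fun t => Complex.exp ((x : ℂ) * t * Complex.I) * (((c : ℂ) + t * Complex.I)⁻¹) ^ 2 with hG
  have h1 : (∫ ξ : ℝ, G (2 * π * ξ)) = ff c x := by
    rw [← hinv, Real.fourierInv_eq_fourier_neg,
      Real.fourier_real_eq_integral_exp_smul]
    congr 1
    funext ξ
    rw [ff_fourier hc, smul_eq_mul, hG]
    push_cast
    ring_nf
  have h2 := MeasureTheory.Measure.integral_comp_mul_left G (2 * π)
  rw [h1, abs_of_pos (a := (2*π)⁻¹) (by positivity)] at h2
  have h3 : ((2 * π : ℝ) : ℂ)⁻¹ * ∫ t, G t = ff c x := by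
    rw [h2, Complex.real_smul]
    push_cast
    ring
  have hint : (∫ t : ℝ, Complex.exp ((x : ℂ) * ((c : ℂ) + (t : ℂ) * Complex.I)) /
      ((c : ℂ) + (t : ℂ) * Complex.I) ^ 2) = ∫ t : ℝ, Complex.exp ((x : ℂ) * c) * G t := by
    congr 1
    funext t
    rw [hG, div_eq_mul_inv, ← inv_pow,
      show (x : ℂ) * ((c : ℂ) + (t : ℂ) * Complex.I) = x * c + x * t * Complex.I by ring,
      Complex.exp_add]
    ring
  rw [hint, integral_const_mul, show ((2 * Real.pi : ℝ) : ℂ)⁻¹ *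
      (Complex.exp ((x : ℂ) * c) * ∫ t, G t)
    = Complex.exp ((x : ℂ) * c) * (((2 * π : ℝ) : ℂ)⁻¹ * ∫ t, G t) by ring, h3]
  unfold ff
  rw [← mul_assoc, mul_comm (Complex.exp _), mul_assoc, ← Complex.exp_add,
    show (x : ℂ) * c + -((c : ℂ) * x) = 0 by ring, Complex.exp_zero, mul_one]
end

section
/- Let N ≤ T be positive reals and a(n), b(n) complex numbers for natural numbers n ≤ N. Then ∫_T^{2T} (Σ_{m≤N} a(m) m^{−it})(Σ_{n≤N} b(n) n^{it}) dt = T·Σ_{n≤N} a(n)b(n) + O(N log N · Σ_{n≤N}(|a(n)|² + |b(n)|²)), with an absolute implied constant. -/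
open MeasureTheory Complex

section aux
open Finset

-- log gap: for 1 ≤ q < p ≤ K
lemma log_gap {p q : ℕ} (hq : 1 ≤ q) (hpq : q < p) {K : ℝ} (hp : (p:ℝ) ≤ K) :
    ((p:ℝ) - q) / K ≤ Real.log p - Real.log q := by
  have hq0 : (0:ℝ) < q := by exact_mod_cast hq
  have hp0 : (0:ℝ) < p := lt_trans hq0 (by exact_mod_cast hpq)
  have hK : (0:ℝ) < K := lt_of_lt_of_le hp0 hp
  have h1 : Real.log p - Real.log q = Real.log ((p:ℝ)/q) := by
    rw [Real.log_div (by positivity) (by positivity)]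
  rw [h1]
  have h2 : Real.log ((q:ℝ)/p) ≤ (q:ℝ)/p - 1 := Real.log_le_sub_one_of_pos (by positivity)
  have h3 : Real.log ((q:ℝ)/p) = - Real.log ((p:ℝ)/q) := by
    rw [← Real.log_inv]; congr 1; field_simp
  have h4 : 1 - (q:ℝ)/p ≤ Real.log ((p:ℝ)/q) := by linarith [h2, h3.symm ▸ h2]
  have h5 : ((p:ℝ) - q)/K ≤ ((p:ℝ) - q)/p := by
    apply div_le_div_of_nonneg_left _ hp0 hp
    have : (q:ℝ) < p := by exact_mod_cast hpq
    linarith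
  have h6 : ((p:ℝ) - q)/p = 1 - (q:ℝ)/p := by field_simp
  linarith

lemma harm_le {K : ℕ} : ∑ d ∈ Icc 1 K, (d:ℝ)⁻¹ ≤ 1 + Real.log K := by
  have h1 : ∑ d ∈ Icc 1 K, (d:ℝ)⁻¹ = ((harmonic K : ℚ) : ℝ) := by
    rw [harmonic_eq_sum_Icc]; push_cast; ring
  rw [h1]
  exact_mod_cast harmonic_le_one_add_log K

lemma sum_inv_dist {K m : ℕ} (hm : m ∈ Icc 1 K) :
    ∑ n ∈ (Icc 1 K).erase m, |(n:ℝ) - m|⁻¹ ≤ 2 * (1 + Real.log K) := by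
  classical
  have hm' := Finset.mem_Icc.mp hm
  have key : ∀ (A : Finset ℕ) (e : ℕ → ℕ), (∀ n ∈ A, e n ∈ Icc 1 K) →
      (∀ x ∈ A, ∀ y ∈ A, e x = e y → x = y) →
      (∀ n ∈ A, |(n:ℝ) - m|⁻¹ = ((e n : ℝ))⁻¹) →
      ∑ n ∈ A, |(n:ℝ) - m|⁻¹ ≤ 1 + Real.log K := by
    intro A e hmem hinj hval
    calc ∑ n ∈ A, |(n:ℝ) - m|⁻¹ = ∑ n ∈ A, ((e n : ℝ))⁻¹ := Finset.sum_congr rfl hval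
      _ = ∑ d ∈ A.image e, (d:ℝ)⁻¹ := (Finset.sum_image (g := e) (f := fun d : ℕ => (d:ℝ)⁻¹) hinj).symm
      _ ≤ ∑ d ∈ Icc 1 K, (d:ℝ)⁻¹ := by
          apply Finset.sum_le_sum_of_subset_of_nonneg
          · intro d hd
            obtain ⟨n, hn, rfl⟩ := Finset.mem_image.mp hd
            exact hmem n hn
          · intro d _ _; positivity
      _ ≤ 1 + Real.log K := harm_le
  have hsplit : (Icc 1 K).erase m =
      ((Icc 1 K).erase m).filter (· < m) ∪ ((Icc 1 K).erase m).filter (m < ·) := by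
    ext n
    simp only [Finset.mem_union, Finset.mem_filter, Finset.mem_erase]
    constructor
    · rintro ⟨h1, h2⟩
      rcases lt_or_gt_of_ne h1 with h | h
      · exact Or.inl ⟨⟨h1, h2⟩, h⟩
      · exact Or.inr ⟨⟨h1, h2⟩, h⟩
    · rintro (⟨h, _⟩ | ⟨h, _⟩) <;> exact h
  have hdisj : Disjoint (((Icc 1 K).erase m).filter (· < m))
      (((Icc 1 K).erase m).filter (m < ·)) := by
    simp only [Finset.disjoint_left, Finset.mem_filter]
    rintro a ⟨_, h1⟩ ⟨_, h2⟩
    omega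
  rw [hsplit, Finset.sum_union hdisj]
  have b1 : ∑ n ∈ ((Icc 1 K).erase m).filter (· < m), |(n:ℝ) - m|⁻¹ ≤ 1 + Real.log K := by
    apply key _ (fun n => m - n)
    · intro n hn
      simp only [Finset.mem_filter, Finset.mem_erase, Finset.mem_Icc] at hn
      simp only [Finset.mem_Icc]
      omega
    · intro x hx y hy h
      simp only [Finset.mem_filter, Finset.mem_erase, Finset.mem_Icc] at hx hy
      omega
    · intro n hn
      simp only [Finset.mem_filter, Finset.mem_erase, Finset.mem_Icc] at hn
      congr 1
      rw [abs_sub_comm, abs_of_pos]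
      · push_cast [Nat.cast_sub (le_of_lt hn.2)]; ring
      · have : (n:ℝ) < m := by exact_mod_cast hn.2
        linarith
  have b2 : ∑ n ∈ ((Icc 1 K).erase m).filter (m < ·), |(n:ℝ) - m|⁻¹ ≤ 1 + Real.log K := by
    apply key _ (fun n => n - m)
    · intro n hn
      simp only [Finset.mem_filter, Finset.mem_erase, Finset.mem_Icc] at hn
      simp only [Finset.mem_Icc]
      omega
    · intro x hx y hy h
      simp only [Finset.mem_filter, Finset.mem_erase, Finset.mem_Icc] at hx hy
      omega
    · intro n hn
      simp only [Finset.mem_filter, Finset.mem_erase, Finset.mem_Icc] at hn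
      congr 1
      rw [abs_of_pos]
      · push_cast [Nat.cast_sub (le_of_lt hn.2)]; ring
      · have : (m:ℝ) < n := by exact_mod_cast hn.2
        linarith
  linarith

lemma sum_inv_loggap {K m : ℕ} (hm : m ∈ Icc 1 K) {N : ℝ} (hKN : (K:ℝ) ≤ N) :
    ∑ n ∈ (Icc 1 K).erase m, |Real.log n - Real.log m|⁻¹ ≤ 2 * N * (1 + Real.log N) := by
  have hm' := Finset.mem_Icc.mp hm
  have hN1 : (1:ℝ) ≤ N := le_trans (by exact_mod_cast hm'.1.trans hm'.2) hKN
  have hN0 : (0:ℝ) < N := lt_of_lt_of_le one_pos hN1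
  have term : ∀ n ∈ (Icc 1 K).erase m,
      |Real.log n - Real.log m|⁻¹ ≤ N * |(n:ℝ) - m|⁻¹ := by
    intro n hn
    have hn' := Finset.mem_Icc.mp (Finset.mem_of_mem_erase hn)
    have hne : n ≠ m := Finset.ne_of_mem_erase hn
    have hgap : |(n:ℝ) - m| / N ≤ |Real.log n - Real.log m| := by
      rcases lt_or_gt_of_ne hne with h | h
      · have := log_gap hn'.1 h (le_trans (by exact_mod_cast hm'.2) hKN)
        have h1 : |(n:ℝ) - m| = (m:ℝ) - n := by
          have hc : (n:ℝ) < m := by exact_mod_cast h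
          rw [abs_sub_comm, abs_of_pos (by linarith)]
        have h2 : |Real.log n - Real.log m| = Real.log m - Real.log n := by
          rw [abs_sub_comm, _root_.abs_of_nonneg]
          have : Real.log n ≤ Real.log m :=
            Real.log_le_log (by exact_mod_cast hn'.1) (by exact_mod_cast h.le)
          linarith
        rw [h1, h2]; exact this
      · have := log_gap hm'.1 h (le_trans (by exact_mod_cast hn'.2) hKN)
        have h1 : |(n:ℝ) - m| = (n:ℝ) - m := by
          have hc : (m:ℝ) < n := by exact_mod_cast h
          rw [abs_of_pos (by linarith)]
        have h2 : |Real.log n - Real.log m| = Real.log n - Real.log m := by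
          rw [_root_.abs_of_nonneg]
          have : Real.log m ≤ Real.log n :=
            Real.log_le_log (by exact_mod_cast hm'.1) (by exact_mod_cast h.le)
          linarith
        rw [h1, h2]; exact this
    have hpos : (0:ℝ) < |(n:ℝ) - m| := by
      rw [abs_pos, sub_ne_zero]
      exact fun h => hne (by exact_mod_cast h)
    calc |Real.log n - Real.log m|⁻¹ ≤ (|(n:ℝ) - m| / N)⁻¹ := by
          apply inv_anti₀ (by positivity) hgap
      _ = N * |(n:ℝ) - m|⁻¹ := by field_simp
  calc ∑ n ∈ (Icc 1 K).erase m, |Real.log n - Real.log m|⁻¹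
      ≤ ∑ n ∈ (Icc 1 K).erase m, N * |(n:ℝ) - m|⁻¹ := Finset.sum_le_sum term
    _ = N * ∑ n ∈ (Icc 1 K).erase m, |(n:ℝ) - m|⁻¹ := by rw [Finset.mul_sum]
    _ ≤ N * (2 * (1 + Real.log K)) := by
        apply mul_le_mul_of_nonneg_left (sum_inv_dist hm) hN0.le
    _ ≤ 2 * N * (1 + Real.log N) := by
        have : Real.log K ≤ Real.log N := Real.log_le_log (by exact_mod_cast lt_of_lt_of_le one_pos (by exact_mod_cast hm'.1.trans hm'.2 : (1:ℝ) ≤ K)) hKN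
        nlinarith [Real.log_nonneg hN1]


-- integral lemmas
lemma cpow_rw (m n : ℕ) (hm : 1 ≤ m) (hn : 1 ≤ n) (t : ℝ) :
    (m : ℂ) ^ (-((t : ℂ) * Complex.I)) * (n : ℂ) ^ ((t : ℂ) * Complex.I)
      = Complex.exp ((Complex.I * ((Real.log n - Real.log m : ℝ) : ℂ)) * t) := by
  have hm0 : (m : ℂ) ≠ 0 := Nat.cast_ne_zero.mpr (by omega)
  have hn0 : (n : ℂ) ≠ 0 := Nat.cast_ne_zero.mpr (by omega)
  rw [Complex.cpow_def_of_ne_zero hm0, Complex.cpow_def_of_ne_zero hn0, ← Complex.exp_add]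
  congr 1
  have hm1 : Complex.log (m : ℂ) = (Real.log m : ℂ) := by
    rw [← Complex.ofReal_natCast, Complex.ofReal_log (by positivity)]
  have hn1 : Complex.log (n : ℂ) = (Real.log n : ℂ) := by
    rw [← Complex.ofReal_natCast, Complex.ofReal_log (by positivity)]
  rw [hm1, hn1]
  push_cast
  ring

lemma int_bound (L T : ℝ) (hL : L ≠ 0) :
    ‖∫ t in T..(2*T), Complex.exp ((Complex.I * (L:ℂ)) * t)‖ ≤ 2 * |L|⁻¹ := by
  have hc : (Complex.I * (L:ℂ)) ≠ 0 := by
    simp [Complex.I_ne_zero, Complex.ofReal_eq_zero, hL]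
  rw [integral_exp_mul_complex hc]
  have h1 : ∀ s : ℝ, ‖Complex.exp (Complex.I * (L:ℂ) * s)‖ = 1 := by
    intro s
    rw [Complex.norm_exp]
    simp [Complex.mul_re]
  rw [norm_div]
  have h2 : ‖Complex.I * (L:ℂ)‖ = |L| := by
    simp
  rw [h2, div_eq_mul_inv]
  gcongr
  calc ‖Complex.exp (Complex.I * (L:ℂ) * ((2*T:ℝ):ℂ)) - Complex.exp (Complex.I * (L:ℂ) * (T:ℂ))‖
      ≤ ‖Complex.exp (Complex.I * (L:ℂ) * ((2*T:ℝ):ℂ))‖ + ‖Complex.exp (Complex.I * (L:ℂ) * (T:ℂ))‖ :=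
        norm_sub_le _ _
    _ ≤ 2 := by rw [h1, h1]; norm_num

end aux

section aux2
open MeasureTheory Complex Finset
theorem stmt_6 :
    ∃ C : ℝ, 0 < C ∧ ∀ (T N : ℝ), 0 < N → N ≤ T → ∀ a b : ℕ → ℂ,
      ‖(∫ t in T..(2 * T),
            (∑ m ∈ Finset.Icc 1 ⌊N⌋₊, a m * (m : ℂ) ^ (-((t : ℂ) * Complex.I))) *
            (∑ n ∈ Finset.Icc 1 ⌊N⌋₊, b n * (n : ℂ) ^ ((t : ℂ) * Complex.I)))
          - (T : ℂ) * ∑ n ∈ Finset.Icc 1 ⌊N⌋₊, a n * b n‖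
        ≤ C * (N * Real.log N * ∑ n ∈ Finset.Icc 1 ⌊N⌋₊, (‖a n‖ ^ 2 + ‖b n‖ ^ 2)) := by
  refine ⟨5, by norm_num, fun T N hN hNT a b => ?_⟩
  classical
  set K := ⌊N⌋₊ with hK
  set S := Finset.Icc 1 K with hS
  have hKN : (K : ℝ) ≤ N := Nat.floor_le hN.le
  set c : ℕ → ℕ → ℂ := fun m n => Complex.I * ((Real.log n - Real.log m : ℝ) : ℂ) with hc
  set J : ℕ → ℕ → ℂ := fun m n => ∫ t in T..(2*T), Complex.exp (c m n * t) with hJ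
  have hcont : ∀ z : ℂ, Continuous fun t : ℝ => Complex.exp (z * t) :=
    fun z => Complex.continuous_exp.comp (continuous_const.mul Complex.continuous_ofReal)
  -- Step 1+2: integral equals double sum
  have hint : (∫ t in T..(2 * T),
        (∑ m ∈ S, a m * (m : ℂ) ^ (-((t : ℂ) * Complex.I))) *
        (∑ n ∈ S, b n * (n : ℂ) ^ ((t : ℂ) * Complex.I)))
      = ∑ m ∈ S, ∑ n ∈ S, (a m * b n) * J m n := by
    have h1 : ∀ t : ℝ,
        (∑ m ∈ S, a m * (m : ℂ) ^ (-((t : ℂ) * Complex.I))) *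
        (∑ n ∈ S, b n * (n : ℂ) ^ ((t : ℂ) * Complex.I))
        = ∑ m ∈ S, ∑ n ∈ S, (a m * b n) * Complex.exp (c m n * t) := by
      intro t
      rw [Finset.sum_mul_sum]
      refine Finset.sum_congr rfl fun m hm => Finset.sum_congr rfl fun n hn => ?_
      have hm1 : 1 ≤ m := (Finset.mem_Icc.mp hm).1
      have hn1 : 1 ≤ n := (Finset.mem_Icc.mp hn).1
      rw [← cpow_rw m n hm1 hn1 t]
      ring
    calc (∫ t in T..(2 * T),
          (∑ m ∈ S, a m * (m : ℂ) ^ (-((t : ℂ) * Complex.I))) *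
          (∑ n ∈ S, b n * (n : ℂ) ^ ((t : ℂ) * Complex.I)))
        = ∫ t in T..(2*T), ∑ m ∈ S, ∑ n ∈ S, (a m * b n) * Complex.exp (c m n * t) := by
          apply intervalIntegral.integral_congr
          intro t _
          exact h1 t
      _ = ∑ m ∈ S, ∫ t in T..(2*T), ∑ n ∈ S, (a m * b n) * Complex.exp (c m n * t) := by
          apply intervalIntegral.integral_finset_sum
          intro m _
          apply Continuous.intervalIntegrable
          exact continuous_finset_sum _ fun n _ => continuous_const.mul (hcont _)
      _ = ∑ m ∈ S, ∑ n ∈ S, ∫ t in T..(2*T), (a m * b n) * Complex.exp (c m n * t) := by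
          refine Finset.sum_congr rfl fun m _ => ?_
          apply intervalIntegral.integral_finset_sum
          intro n _
          exact (continuous_const.mul (hcont _)).intervalIntegrable _ _
      _ = ∑ m ∈ S, ∑ n ∈ S, (a m * b n) * J m n := by
          refine Finset.sum_congr rfl fun m _ => Finset.sum_congr rfl fun n _ => ?_
          rw [hJ]
          exact intervalIntegral.integral_const_mul _ _
  -- diagonal value
  have hJdiag : ∀ m : ℕ, J m m = (T : ℂ) := by
    intro m
    have : c m m = 0 := by simp [hc]
    rw [hJ]
    simp only [this, zero_mul, Complex.exp_zero]
    simp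
    ring
  -- split diagonal
  have hsplit : ∑ m ∈ S, ∑ n ∈ S, (a m * b n) * J m n
      = (T:ℂ) * (∑ n ∈ S, a n * b n) + ∑ m ∈ S, ∑ n ∈ S.erase m, (a m * b n) * J m n := by
    have : ∀ m ∈ S, ∑ n ∈ S, (a m * b n) * J m n
        = (a m * b m) * (T:ℂ) + ∑ n ∈ S.erase m, (a m * b n) * J m n := by
      intro m hm
      rw [← Finset.add_sum_erase S _ hm, hJdiag]
    rw [Finset.sum_congr rfl this, Finset.sum_add_distrib, Finset.mul_sum]
    congr 1
    refine Finset.sum_congr rfl fun n _ => ?_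
    ring
  rw [hint, hsplit]
  have hcancel : (T:ℂ) * (∑ n ∈ S, a n * b n) + (∑ m ∈ S, ∑ n ∈ S.erase m, (a m * b n) * J m n)
      - (T:ℂ) * ∑ n ∈ S, a n * b n = ∑ m ∈ S, ∑ n ∈ S.erase m, (a m * b n) * J m n := by ring
  rw [hcancel]
  -- norm of each off-diagonal integral
  have hJbound : ∀ m ∈ S, ∀ n ∈ S.erase m,
      ‖J m n‖ ≤ 2 * |Real.log n - Real.log m|⁻¹ := by
    intro m hm n hn
    have hm1 : 1 ≤ m := (Finset.mem_Icc.mp hm).1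
    have hn1 : 1 ≤ n := (Finset.mem_Icc.mp (Finset.mem_of_mem_erase hn)).1
    have hne : n ≠ m := Finset.ne_of_mem_erase hn
    have hL : Real.log n - Real.log m ≠ 0 := by
      rw [sub_ne_zero]
      rcases lt_or_gt_of_ne hne with h | h
      · exact ne_of_lt (Real.log_lt_log (by exact_mod_cast hn1) (by exact_mod_cast h))
      · exact ne_of_gt (Real.log_lt_log (by exact_mod_cast hm1) (by exact_mod_cast h))
    exact int_bound _ T hL
  set Ssq := ∑ n ∈ S, (‖a n‖ ^ 2 + ‖b n‖ ^ 2) with hSsq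
  have hSsq0 : 0 ≤ Ssq := Finset.sum_nonneg fun n _ => by positivity
  -- bound by the weighted sum
  have hE : ‖∑ m ∈ S, ∑ n ∈ S.erase m, (a m * b n) * J m n‖
      ≤ ∑ m ∈ S, ∑ n ∈ S.erase m,
          (‖a m‖ ^ 2 + ‖b n‖ ^ 2) * |Real.log n - Real.log m|⁻¹ := by
    calc ‖∑ m ∈ S, ∑ n ∈ S.erase m, (a m * b n) * J m n‖
        ≤ ∑ m ∈ S, ∑ n ∈ S.erase m, ‖(a m * b n) * J m n‖ := by
          refine (norm_sum_le _ _).trans (Finset.sum_le_sum fun m _ => norm_sum_le _ _)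
      _ ≤ ∑ m ∈ S, ∑ n ∈ S.erase m,
            (‖a m‖ ^ 2 + ‖b n‖ ^ 2) * |Real.log n - Real.log m|⁻¹ := by
          refine Finset.sum_le_sum fun m hm => Finset.sum_le_sum fun n hn => ?_
          rw [norm_mul, norm_mul]
          have h1 : ‖J m n‖ ≤ 2 * |Real.log n - Real.log m|⁻¹ := hJbound m hm n hn
          have h2 : 2 * ‖a m‖ * ‖b n‖ ≤ ‖a m‖ ^ 2 + ‖b n‖ ^ 2 := by nlinarith [sq_nonneg (‖a m‖ - ‖b n‖)]
          have h3 : (0:ℝ) ≤ |Real.log n - Real.log m|⁻¹ := by positivity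
          have h4 : ‖a m‖ * ‖b n‖ * ‖J m n‖ ≤ ‖a m‖ * ‖b n‖ * (2 * |Real.log n - Real.log m|⁻¹) := by
            apply mul_le_mul_of_nonneg_left h1 (by positivity)
          nlinarith [norm_nonneg (a m), norm_nonneg (b n)]
  -- split into a-part and b-part
  have hEsplit : ∑ m ∈ S, ∑ n ∈ S.erase m,
        (‖a m‖ ^ 2 + ‖b n‖ ^ 2) * |Real.log n - Real.log m|⁻¹
      ≤ 2 * N * (1 + Real.log N) * Ssq := by
    have hA : ∑ m ∈ S, ∑ n ∈ S.erase m, ‖a m‖ ^ 2 * |Real.log n - Real.log m|⁻¹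
        ≤ (2 * N * (1 + Real.log N)) * ∑ m ∈ S, ‖a m‖ ^ 2 := by
      rw [Finset.mul_sum]
      refine Finset.sum_le_sum fun m hm => ?_
      rw [← Finset.mul_sum]
      calc ‖a m‖ ^ 2 * ∑ n ∈ S.erase m, |Real.log n - Real.log m|⁻¹
          ≤ ‖a m‖ ^ 2 * (2 * N * (1 + Real.log N)) :=
            mul_le_mul_of_nonneg_left (sum_inv_loggap hm hKN) (by positivity)
        _ = 2 * N * (1 + Real.log N) * ‖a m‖ ^ 2 := by ring
    have hB : ∑ m ∈ S, ∑ n ∈ S.erase m, ‖b n‖ ^ 2 * |Real.log n - Real.log m|⁻¹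
        ≤ (2 * N * (1 + Real.log N)) * ∑ n ∈ S, ‖b n‖ ^ 2 := by
      have hswap : ∑ m ∈ S, ∑ n ∈ S.erase m, ‖b n‖ ^ 2 * |Real.log n - Real.log m|⁻¹
          = ∑ n ∈ S, ∑ m ∈ S.erase n, ‖b n‖ ^ 2 * |Real.log n - Real.log m|⁻¹ := by
        have e1 : ∀ m ∈ S, ∑ n ∈ S.erase m, ‖b n‖ ^ 2 * |Real.log n - Real.log m|⁻¹
            = ∑ n ∈ S, if n = m then 0 else ‖b n‖ ^ 2 * |Real.log n - Real.log m|⁻¹ := by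
          intro m _
          rw [← Finset.sum_erase S (f := fun n => if n = m then 0 else ‖b n‖ ^ 2 * |Real.log n - Real.log m|⁻¹) (a := m) (by simp)]
          refine Finset.sum_congr rfl fun n hn => ?_
          rw [if_neg (Finset.ne_of_mem_erase hn)]
        have e2 : ∀ n ∈ S, ∑ m ∈ S, (if n = m then 0 else ‖b n‖ ^ 2 * |Real.log n - Real.log m|⁻¹)
            = ∑ m ∈ S.erase n, ‖b n‖ ^ 2 * |Real.log n - Real.log m|⁻¹ := by
          intro n _
          rw [← Finset.sum_erase S (f := fun m => if n = m then 0 else ‖b n‖ ^ 2 * |Real.log n - Real.log m|⁻¹) (a := n) (by simp)]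
          refine Finset.sum_congr rfl fun m hm => ?_
          rw [if_neg (Ne.symm (Finset.ne_of_mem_erase hm))]
        rw [Finset.sum_congr rfl e1, Finset.sum_comm, Finset.sum_congr rfl e2]
      rw [hswap, Finset.mul_sum]
      refine Finset.sum_le_sum fun n hn => ?_
      rw [← Finset.mul_sum]
      have habs : ∑ m ∈ S.erase n, |Real.log n - Real.log m|⁻¹
          = ∑ m ∈ S.erase n, |Real.log m - Real.log n|⁻¹ := by
        refine Finset.sum_congr rfl fun m _ => by rw [abs_sub_comm]
      calc ‖b n‖ ^ 2 * ∑ m ∈ S.erase n, |Real.log n - Real.log m|⁻¹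
          ≤ ‖b n‖ ^ 2 * (2 * N * (1 + Real.log N)) := by
            apply mul_le_mul_of_nonneg_left _ (by positivity)
            rw [habs]
            exact sum_inv_loggap hn hKN
        _ = 2 * N * (1 + Real.log N) * ‖b n‖ ^ 2 := by ring
    calc ∑ m ∈ S, ∑ n ∈ S.erase m,
          (‖a m‖ ^ 2 + ‖b n‖ ^ 2) * |Real.log n - Real.log m|⁻¹
        = (∑ m ∈ S, ∑ n ∈ S.erase m, ‖a m‖ ^ 2 * |Real.log n - Real.log m|⁻¹)
          + ∑ m ∈ S, ∑ n ∈ S.erase m, ‖b n‖ ^ 2 * |Real.log n - Real.log m|⁻¹ := by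
          rw [← Finset.sum_add_distrib]
          refine Finset.sum_congr rfl fun m _ => ?_
          rw [← Finset.sum_add_distrib]
          refine Finset.sum_congr rfl fun n _ => by ring
      _ ≤ (2 * N * (1 + Real.log N)) * ∑ m ∈ S, ‖a m‖ ^ 2
          + (2 * N * (1 + Real.log N)) * ∑ n ∈ S, ‖b n‖ ^ 2 := add_le_add hA hB
      _ = 2 * N * (1 + Real.log N) * Ssq := by
          rw [hSsq, Finset.sum_add_distrib]; ring
  -- conclude, splitting on whether K ≥ 2
  rcases le_or_gt K 1 with hK1 | hK2
  · have hzero : ∀ m ∈ S, S.erase m = ∅ := by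
      intro m hm
      have := Finset.mem_Icc.mp hm
      apply Finset.eq_empty_of_forall_notMem
      intro x hx
      have h1 := Finset.ne_of_mem_erase hx
      have h2 := Finset.mem_Icc.mp (Finset.mem_of_mem_erase hx)
      omega
    have : ∑ m ∈ S, ∑ n ∈ S.erase m, (a m * b n) * J m n = 0 := by
      refine Finset.sum_eq_zero fun m hm => ?_
      rw [hzero m hm, Finset.sum_empty]
    rw [this, norm_zero]
    have hrhs : 0 ≤ N * Real.log N * Ssq := by
      rcases Nat.eq_zero_or_pos K with h0 | h1
      · have : S = ∅ := by rw [hS, h0]; rfl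
        rw [hSsq, this, Finset.sum_empty]
        ring_nf
        simp
      · have hN1 : (1:ℝ) ≤ N := by
          calc (1:ℝ) ≤ (K:ℝ) := by exact_mod_cast h1
            _ ≤ N := hKN
        have := Real.log_nonneg hN1
        positivity
    linarith
  · have hN2 : (2:ℝ) ≤ N := by
      calc (2:ℝ) ≤ (K:ℝ) := by exact_mod_cast hK2
        _ ≤ N := hKN
    have hlogN : (0.693:ℝ) ≤ Real.log N := by
      calc (0.693:ℝ) ≤ Real.log 2 := by
            have := Real.log_two_gt_d9
            linarith
        _ ≤ Real.log N := Real.log_le_log (by norm_num) hN2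
    have hfinal : 2 * N * (1 + Real.log N) * Ssq ≤ 5 * (N * Real.log N * Ssq) := by
      have h1 : 2 * (1 + Real.log N) ≤ 5 * Real.log N := by linarith
      have hN0 : (0:ℝ) < N := hN
      nlinarith [mul_le_mul_of_nonneg_right h1 (mul_nonneg hN0.le hSsq0)]
    calc ‖∑ m ∈ S, ∑ n ∈ S.erase m, (a m * b n) * J m n‖
        ≤ ∑ m ∈ S, ∑ n ∈ S.erase m,
            (‖a m‖ ^ 2 + ‖b n‖ ^ 2) * |Real.log n - Real.log m|⁻¹ := hE
      _ ≤ 2 * N * (1 + Real.log N) * Ssq := hEsplit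
      _ ≤ 5 * (N * Real.log N * Ssq) := hfinal

end aux2
end
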